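/- Let A be a Boolean algebra that is ω-free over some subset G ⊆ A. Then A contains no uncountable chain: every subset C ⊆ A that is totally ordered by the Boolean partial order ≤ is countable. -/

import Mathlib

universe u v

/-- A function `f` (restricted to `X`) is ω-preserving: for every finite `H ⊆ X`
with `inf H = ⊥`, the infimum of the image is `⊥`. -/
def OmegaPreserving {α : Type u} {β : Type v} [BooleanAlgebra α] [BooleanAlgebra β]
    (X : Set α) (f : α → β) : Prop :=
  ∀ H : Finset α, ↑H ⊆ X → H.inf id = ⊥ → H.inf f = ⊥

/-- `A` is ω-free over `X`: every ω-preserving function from `X` into any nontrivial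
Boolean algebra extends to a unique Boolean algebra homomorphism. -/
def OmegaFree {α : Type u} [BooleanAlgebra α] (X : Set α) : Prop :=
  ∀ (β : Type v) [BooleanAlgebra β] [Nontrivial β] (f : α → β),
    OmegaPreserving X f → ∃! g : BoundedLatticeHom α β, ∀ x ∈ X, g x = f x

set_option linter.unusedSectionVars false

namespace OFreeAux


abbrev BB : Type v := ULift.{v} Bool

noncomputable instance : HImp (BB.{v}) := ⟨fun x y => ⟨x.down ⇨ y.down⟩⟩

noncomputable instance : BooleanAlgebra (BB.{v}) :=
  ULift.down_injective.booleanAlgebra ULift.down Iff.rfl Iff.rfl (fun _ _ => rfl) (fun _ _ => rfl) rfl rfl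
    (fun _ => rfl) (fun _ _ => rfl) (fun _ _ => rfl)

instance : Nontrivial (BB.{v}) :=
  ⟨⟨⊥, ⊤, fun hh => by simpa using congrArg ULift.down hh⟩⟩

variable {α : Type u} [BooleanAlgebra α]

/-- Boolean subalgebra generated by a set, as a predicate. -/
inductive Gen (X : Set α) : α → Prop
  | base {x : α} : x ∈ X → Gen X x
  | bot : Gen X ⊥
  | compl {x : α} : Gen X x → Gen X xᶜ
  | inf {x y : α} : Gen X x → Gen X y → Gen X (x ⊓ y)

theorem Gen.top {X : Set α} : Gen X ⊤ := by
  have := Gen.compl (Gen.bot (X := X))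
  simpa using this

theorem Gen.sup {X : Set α} {x y : α} (hx : Gen X x) (hy : Gen X y) : Gen X (x ⊔ y) := by
  have := (hx.compl.inf hy.compl).compl
  simpa using this

theorem Gen.mono {X Y : Set α} (hXY : X ⊆ Y) {c : α} (hc : Gen X c) : Gen Y c := by
  induction hc with
  | base hx => exact Gen.base (hXY hx)
  | bot => exact Gen.bot
  | compl _ ih => exact ih.compl
  | inf _ _ ih1 ih2 => exact ih1.inf ih2

theorem Gen.finite [DecidableEq α] {X : Set α} {c : α} (hc : Gen X c) :
    ∃ F : Finset α, ↑F ⊆ X ∧ Gen (↑F : Set α) c := by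
  induction hc with
  | @base x hx => exact ⟨{x}, by simpa using hx, Gen.base (by simp)⟩
  | bot => exact ⟨∅, by simp, Gen.bot⟩
  | compl _ ih => obtain ⟨F, h1, h2⟩ := ih; exact ⟨F, h1, h2.compl⟩
  | inf _ _ ih1 ih2 =>
      obtain ⟨F1, h11, h12⟩ := ih1
      obtain ⟨F2, h21, h22⟩ := ih2
      refine ⟨F1 ∪ F2, ?_, ?_⟩
      · push_cast
        exact Set.union_subset h11 h21
      · exact (h12.mono (by push_cast; exact Set.subset_union_left)).inf
          (h22.mono (by push_cast; exact Set.subset_union_right))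

theorem Gen.finsetInf {X : Set α} {F : Finset α} (hF : ∀ x ∈ F, Gen X x) :
    Gen X (F.inf id) := by
  classical
  induction F using Finset.induction_on with
  | empty => simpa using Gen.top
  | @insert a s _ ih =>
      rw [Finset.inf_insert]
      exact (hF _ (by simp)).inf (ih fun x hxF => hF x (by simp [hxF]))

/-- Two bounded lattice homomorphisms agreeing on `X` agree on everything generated by `X`. -/
theorem Gen.homAgree {β : Type*} [BooleanAlgebra β] {X : Set α}
    (u v : BoundedLatticeHom α β) (huv : ∀ x ∈ X, u x = v x) {c : α} (hc : Gen X c) :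
    u c = v c := by
  induction hc with
  | base hx => exact huv _ hx
  | bot => rw [map_bot, map_bot]
  | compl _ ih => rw [map_compl', map_compl', ih]
  | inf _ _ ih1 ih2 => rw [map_inf, map_inf, ih1, ih2]


variable [DecidableEq α]

structure IsUF (M : Set α) : Prop where
  up : ∀ x ∈ M, ∀ y, x ≤ y → y ∈ M
  inter : ∀ x ∈ M, ∀ y ∈ M, x ⊓ y ∈ M
  nbot : ⊥ ∉ M
  total : ∀ x, x ∈ M ∨ xᶜ ∈ M

theorem IsUF.top_mem {M : Set α} (hM : IsUF M) : ⊤ ∈ M := by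
  rcases hM.total ⊤ with h | h
  · exact h
  · rw [compl_top] at h; exact absurd h hM.nbot

theorem IsUF.finsetInf_mem {M : Set α} (hM : IsUF M) {F : Finset α} (hF : ↑F ⊆ M) :
    F.inf id ∈ M := by
  classical
  induction F using Finset.induction_on with
  | empty => simpa using hM.top_mem
  | @insert a s _ ih =>
      rw [Finset.inf_insert]
      have ha : a ∈ M := hF (by simp)
      exact hM.inter _ ha _ (ih fun x hx => hF (by simp [hx]))

theorem IsUF.finsetInf_ne_bot {M : Set α} (hM : IsUF M) {F : Finset α} (hF : ↑F ⊆ M) :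
    F.inf id ≠ ⊥ := fun h => hM.nbot (h ▸ hM.finsetInf_mem hF)

theorem IsUF.compl_not_mem {M : Set α} (hM : IsUF M) {x : α} (hx : x ∈ M) : xᶜ ∉ M := by
  intro hx'
  have := hM.inter _ hx _ hx'
  rw [inf_compl_eq_bot] at this
  exact hM.nbot this

def FIP (S : Set α) : Prop := ∀ F : Finset α, ↑F ⊆ S → F.inf id ≠ ⊥

theorem finset_subset_chain_mem {c : Set (Set α)} (hc : IsChain (· ⊆ ·) c)
    (hne : c.Nonempty) (F : Finset α) (hF : ↑F ⊆ ⋃₀ c) : ∃ T ∈ c, ↑F ⊆ T := by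
  classical
  induction F using Finset.induction_on with
  | empty => exact ⟨hne.choose, hne.choose_spec, by simp⟩
  | @insert a s ha ih =>
      obtain ⟨T, hTc, hT⟩ := ih ((Finset.coe_subset.2 (Finset.subset_insert a s)).trans hF)
      obtain ⟨T', hT'c, haT'⟩ : ∃ T' ∈ c, a ∈ T' := by
        have := hF (by simp : a ∈ (↑(insert a s) : Set α))
        simpa [Set.mem_sUnion] using this
      rcases eq_or_ne T T' with rfl | hTT'
      · exact ⟨T, hTc, by push_cast; exact Set.insert_subset haT' hT⟩
      rcases hc hTc hT'c hTT' with hsub | hsub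
      · exact ⟨T', hT'c, by push_cast; exact Set.insert_subset haT' (hT.trans hsub)⟩
      · exact ⟨T, hTc, by push_cast; exact Set.insert_subset (hsub haT') hT⟩

theorem erase_subset_of_insert {y : α} {M : Set α} {F : Finset α}
    (hF : ↑F ⊆ insert y M) {z : α} (hz : z ∈ F.erase y) : z ∈ M := by
  rcases Finset.mem_erase.1 hz with ⟨hne, hzF⟩
  rcases hF (by exact_mod_cast hzF) with h | h
  · exact absurd h hne
  · exact h

theorem exists_uf {S : Set α} (hS : FIP S) : ∃ M : Set α, S ⊆ M ∧ IsUF M := by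
  classical
  obtain ⟨M, hSM', hMmax⟩ := zorn_subset_nonempty {T : Set α | S ⊆ T ∧ FIP T}
    (fun c hcsub hchain hcne => by
      refine ⟨⋃₀ c, ⟨?_, ?_⟩, fun s hs => Set.subset_sUnion_of_mem hs⟩
      · obtain ⟨T, hT⟩ := hcne
        exact (hcsub hT).1.trans (Set.subset_sUnion_of_mem hT)
      · intro F hF
        obtain ⟨T, hTc, hFT⟩ := finset_subset_chain_mem hchain hcne F hF
        exact (hcsub hTc).2 F hFT) S ⟨Set.Subset.rfl, hS⟩
  obtain ⟨hSM, hMF⟩ := hMmax.prop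
  have hmax : ∀ T : Set α, S ⊆ T → FIP T → M ⊆ T → T = M := fun T h1 h2 h3 =>
    le_antisymm (hMmax.le_of_ge ⟨h1, h2⟩ h3) h3
  have hnbot : ⊥ ∉ M := by
    intro hb
    exact hMF {⊥} (by simpa using hb) (by simp)
  have hinsert : ∀ y : α, FIP (insert y M) → y ∈ M := by
    intro y hy
    have := hmax (insert y M) (hSM.trans (Set.subset_insert _ _)) hy (Set.subset_insert _ _)
    rw [← this]; exact Set.mem_insert _ _
  -- decompose inf over F with distinguished element y ∈ F
  have hdecomp : ∀ (F : Finset α) (y : α), y ∈ F → F.inf id = y ⊓ (F.erase y).inf id := by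
    intro F y hyF
    conv_lhs => rw [← Finset.insert_erase hyF]
    rw [Finset.inf_insert]; rfl
  refine ⟨M, hSM, ?_, ?_, hnbot, ?_⟩
  · -- upward closed
    intro x hx y hxy
    refine hinsert y ?_
    intro F hF hbot
    by_cases hyF : y ∈ F
    · set e := (F.erase y).inf id with he
      have hsub : ↑(insert x (F.erase y)) ⊆ M := by
        push_cast
        exact Set.insert_subset hx (fun z hz => erase_subset_of_insert hF (by exact_mod_cast hz))
      refine hMF _ hsub ?_
      rw [Finset.inf_insert]
      rw [hdecomp F y hyF] at hbot
      exact le_bot_iff.1 (le_trans (inf_le_inf_right _ hxy) hbot.le)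
    · exact hMF F (fun z hz => by
        rcases hF hz with h | h
        · exact absurd h (by rintro rfl; exact hyF (by exact_mod_cast hz))
        · exact h) hbot
  · -- closed under inf
    intro x hx y hy
    refine hinsert (x ⊓ y) ?_
    intro F hF hbot
    by_cases hzF : x ⊓ y ∈ F
    · set e := (F.erase (x ⊓ y)).inf id with he
      have hsub : ↑(insert x (insert y (F.erase (x ⊓ y)))) ⊆ M := by
        push_cast
        exact Set.insert_subset hx (Set.insert_subset hy
          (fun z hz => erase_subset_of_insert hF (by exact_mod_cast hz)))
      refine hMF _ hsub ?_
      rw [hdecomp F _ hzF] at hbot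
      rw [Finset.inf_insert, Finset.inf_insert]
      simpa [inf_assoc] using hbot
    · exact hMF F (fun z hz => by
        rcases hF hz with h | h
        · exact absurd h (by rintro rfl; exact hzF (by exact_mod_cast hz))
        · exact h) hbot
  · -- total
    intro x
    by_contra hcon
    push_neg at hcon
    obtain ⟨hx, hxc⟩ := hcon
    have h1 : ¬ FIP (insert x M) := fun hfip => hx (hinsert _ hfip)
    have h2 : ¬ FIP (insert xᶜ M) := fun hfip => hxc (hinsert _ hfip)
    simp only [FIP, not_forall] at h1 h2
    obtain ⟨F1, hF1, hF1bot⟩ := h1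
    obtain ⟨F2, hF2, hF2bot⟩ := h2
    rw [not_not] at hF1bot hF2bot
    have hxF1 : x ∈ F1 := by
      by_contra hx1
      exact hMF F1 (fun z hz => by
        rcases hF1 hz with h | h
        · exact absurd h (by rintro rfl; exact hx1 (by exact_mod_cast hz))
        · exact h) hF1bot
    have hxF2 : xᶜ ∈ F2 := by
      by_contra hx2
      exact hMF F2 (fun z hz => by
        rcases hF2 hz with h | h
        · exact absurd h (by rintro rfl; exact hx2 (by exact_mod_cast hz))
        · exact h) hF2bot
    set m1 := (F1.erase x).inf id with hm1
    set m2 := (F2.erase xᶜ).inf id with hm2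
    have hb1 : x ⊓ m1 = ⊥ := by
      rw [hdecomp F1 x hxF1] at hF1bot; exact hF1bot
    have hb2 : xᶜ ⊓ m2 = ⊥ := by
      rw [hdecomp F2 xᶜ hxF2] at hF2bot; exact hF2bot
    have hsub : ↑(F1.erase x ∪ F2.erase xᶜ) ⊆ M := by
      push_cast
      exact Set.union_subset
        (fun z hz => erase_subset_of_insert hF1 (by exact_mod_cast hz))
        (fun z hz => erase_subset_of_insert hF2 (by exact_mod_cast hz))
    refine hMF _ hsub ?_
    rw [Finset.inf_union]
    have : m1 ⊓ m2 = (m1 ⊓ m2) ⊓ x ⊔ (m1 ⊓ m2) ⊓ xᶜ := by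
      rw [← inf_sup_left, sup_compl_eq_top, inf_top_eq]
    rw [← hm1, ← hm2, this]
    have hA : (m1 ⊓ m2) ⊓ x ≤ x ⊓ m1 := by
      rw [inf_comm]
      exact inf_le_inf_left _ inf_le_left
    have hB : (m1 ⊓ m2) ⊓ xᶜ ≤ xᶜ ⊓ m2 := by
      rw [inf_comm]
      exact inf_le_inf_left _ inf_le_right
    rw [hb1] at hA
    rw [hb2] at hB
    rw [le_bot_iff.1 hA, le_bot_iff.1 hB, sup_idem]

theorem bb_top_ne_bot : (⊤ : BB.{v}) ≠ ⊥ := top_ne_bot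

theorem bb_cases (x : BB.{v}) : x = ⊤ ∨ x = ⊥ := by
  rcases x with ⟨b⟩
  cases b
  · right; rfl
  · left; rfl

open Classical in
/-- The two-valued homomorphism associated with an ultrafilter. -/
noncomputable def ufHom {M : Set α} (hM : IsUF M) : BoundedLatticeHom α BB.{v} where
  toFun := fun x => if x ∈ M then ⊤ else ⊥
  map_sup' := by
    intro x y
    by_cases hx : x ∈ M
    · have : x ⊔ y ∈ M := hM.up _ hx _ le_sup_left
      simp [hx, this]
    · by_cases hy : y ∈ M
      · have : x ⊔ y ∈ M := hM.up _ hy _ le_sup_right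
        simp [hy, this]
      · have hxc : xᶜ ∈ M := (hM.total x).resolve_left hx
        have hyc : yᶜ ∈ M := (hM.total y).resolve_left hy
        have hns : x ⊔ y ∉ M := by
          intro hs
          have h1 : xᶜ ⊓ yᶜ ∈ M := hM.inter _ hxc _ hyc
          have h2 : (x ⊔ y) ⊓ (xᶜ ⊓ yᶜ) ∈ M := hM.inter _ hs _ h1
          rw [← compl_sup, inf_compl_eq_bot] at h2
          exact hM.nbot h2
        simp [hx, hy, hns]
  map_inf' := by
    intro x y
    by_cases hx : x ∈ M
    · by_cases hy : y ∈ M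
      · have : x ⊓ y ∈ M := hM.inter _ hx _ hy
        simp [hx, hy, this]
      · have : x ⊓ y ∉ M := fun hm => hy (hM.up _ hm _ inf_le_right)
        simp [hy, this]
    · have : x ⊓ y ∉ M := fun hm => hx (hM.up _ hm _ inf_le_left)
      simp [hx, this]
  map_top' := by
    have : (⊤ : α) ∈ M := by
      rcases hM.total ⊤ with h | h
      · exact h
      · rw [compl_top] at h; exact absurd h hM.nbot
    simp [this]
  map_bot' := by simp [hM.nbot]

theorem ufHom_eq_top {M : Set α} (hM : IsUF M) {x : α} (hx : x ∈ M) :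
    ufHom.{u,v} hM x = ⊤ := by simp [ufHom, hx]

theorem ufHom_eq_bot {M : Set α} (hM : IsUF M) {x : α} (hx : x ∉ M) :
    ufHom.{u,v} hM x = ⊥ := by simp [ufHom, hx]

theorem ufHom_mem_iff {M : Set α} (hM : IsUF M) {x : α} :
    ufHom.{u,v} hM x = ⊤ ↔ x ∈ M := by
  constructor
  · intro hx
    by_contra hm
    rw [ufHom_eq_bot hM hm] at hx
    exact bb_top_ne_bot hx.symm
  · exact ufHom_eq_top hM



variable {G : Set α}

/-- restriction of any hom is ω-preserving -/
theorem hom_omegaPreserving (u : BoundedLatticeHom α BB.{v}) :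
    OmegaPreserving G (⇑u) := by
  intro H hHG hbot
  have := map_finset_inf u H id
  rw [hbot, map_bot] at this
  have h2 : H.inf (⇑u ∘ id) = H.inf ⇑u := rfl
  rw [h2] at this
  exact this.symm

/-- two Bool-valued homs agreeing on G are equal -/
theorem homs_agree (h : OmegaFree.{u,v} G) (u₁ u₂ : BoundedLatticeHom α BB.{v})
    (hagree : ∀ x ∈ G, u₁ x = u₂ x) : u₁ = u₂ := by
  obtain ⟨g, _, hguniq⟩ := h BB (⇑u₁) (hom_omegaPreserving u₁)
  have h1 : u₁ = g := hguniq u₁ (fun x _ => rfl)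
  have h2 : u₂ = g := hguniq u₂ (fun x hx => (hagree x hx).symm)
  rw [h1, h2]

open Classical in
/-- indicator function of a finite subset -/
noncomputable def chi (P : Finset α) : α → BB.{v} := fun x => if x ∈ P then ⊤ else ⊥

theorem chi_omegaPreserving {P : Finset α} (hPG : ↑P ⊆ G) (hPb : P.inf id ≠ ⊥) :
    OmegaPreserving G (chi.{u,v} P) := by
  classical
  intro H hHG hbot
  by_cases hsub : H ⊆ P
  · exact absurd (le_bot_iff.1 (hbot ▸ Finset.inf_mono hsub)) hPb
  · obtain ⟨x, hxH, hxP⟩ := Finset.not_subset.1 hsub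
    have : H.inf (chi.{u,v} P) ≤ chi.{u,v} P x := Finset.inf_le hxH
    have hx0 : chi.{u,v} P x = ⊥ := by rw [chi, if_neg hxP]
    rw [hx0] at this
    exact le_bot_iff.1 this

variable (h : OmegaFree.{u,v} G)

open Classical in
/-- Evaluation of an element at the unique homomorphism extending the
indicator function of a finite independent subset of `G`. -/
noncomputable def eval (P : Finset α) (c : α) : BB.{v} :=
  if hP : ↑P ⊆ G ∧ P.inf id ≠ ⊥ then (h BB (chi P) (chi_omegaPreserving hP.1 hP.2)).choose c
  else ⊥

theorem eval_spec {P : Finset α} (hP : ↑P ⊆ G ∧ P.inf id ≠ ⊥) :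
    ∃ u : BoundedLatticeHom α BB.{v}, (∀ x ∈ G, u x = chi P x) ∧ ∀ c, eval h P c = u c := by
  refine ⟨(h BB (chi P) (chi_omegaPreserving hP.1 hP.2)).choose,
    (h BB (chi P) (chi_omegaPreserving hP.1 hP.2)).choose_spec.1, fun c => ?_⟩
  rw [eval, dif_pos hP]

theorem eval_mono {P : Finset α} {c d : α} (hcd : c ≤ d) : eval h P c ≤ eval h P d := by
  by_cases hP : ↑P ⊆ G ∧ P.inf id ≠ ⊥
  · obtain ⟨u, _, hu⟩ := eval_spec h hP
    rw [hu, hu]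
    have : u c ⊔ u d = u d := by rw [← map_sup, sup_eq_right.2 hcd]
    exact le_of_sup_eq this
  · rw [eval, dif_neg hP]; exact bot_le



theorem delta_system {ι : Type*} {β : Type*} [DecidableEq β] :
    ∀ (n : ℕ) (𝒞 : Set ι) (F : ι → Finset β), ¬𝒞.Countable → (∀ c ∈ 𝒞, (F c).card = n) →
    ∃ 𝒟, 𝒟 ⊆ 𝒞 ∧ ¬𝒟.Countable ∧ ∃ R : Finset β, ∀ c ∈ 𝒟, ∀ d ∈ 𝒟, c ≠ d → F c ∩ F d = R := by
  intro n
  induction n with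
  | zero =>
      intro 𝒞 F hunc hcard
      refine ⟨𝒞, Set.Subset.rfl, hunc, ∅, fun c hc d hd _ => ?_⟩
      rw [Finset.card_eq_zero.1 (hcard c hc), Finset.empty_inter]
  | succ n ih =>
      intro 𝒞 F hunc hcard
      by_cases hx : ∃ x : β, ¬{c ∈ 𝒞 | x ∈ F c}.Countable
      · obtain ⟨x, hxunc⟩ := hx
        obtain ⟨𝒟, h𝒟sub, h𝒟unc, R', hR'⟩ := ih {c ∈ 𝒞 | x ∈ F c} (fun c => (F c).erase x)
          hxunc (fun c hc => by
            rw [Finset.card_erase_of_mem hc.2, hcard c hc.1]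
            omega)
        refine ⟨𝒟, h𝒟sub.trans (Set.sep_subset _ _), h𝒟unc, insert x R', ?_⟩
        intro c hc d hd hcd
        have hxc : x ∈ F c := (h𝒟sub hc).2
        have hxd : x ∈ F d := (h𝒟sub hd).2
        have herase := hR' c hc d hd hcd
        ext y
        by_cases hyx : y = x
        · subst hyx
          simp [hxc, hxd]
        · simp only [Finset.mem_inter, Finset.mem_insert, hyx, false_or]
          rw [← herase]
          simp [Finset.mem_erase, hyx]
      · push_neg at hx
        obtain ⟨D, hDmax⟩ := zorn_subset
          {D : Set ι | D ⊆ 𝒞 ∧ ∀ c ∈ D, ∀ d ∈ D, c ≠ d → F c ∩ F d = ∅}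
          (fun ch hchsub hchain => by
            refine ⟨⋃₀ ch, ⟨?_, ?_⟩, fun s hs => Set.subset_sUnion_of_mem hs⟩
            · exact Set.sUnion_subset fun T hT => (hchsub hT).1
            · rintro c ⟨T1, hT1, hc1⟩ d ⟨T2, hT2, hd2⟩ hcd
              rcases eq_or_ne T1 T2 with rfl | hT12
              · exact (hchsub hT1).2 c hc1 d hd2 hcd
              rcases hchain hT1 hT2 hT12 with hsub | hsub
              · exact (hchsub hT2).2 c (hsub hc1) d hd2 hcd
              · exact (hchsub hT1).2 c hc1 d (hsub hd2) hcd)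
        by_cases hDc : D.Countable
        · exfalso
          have hE : (⋃ d ∈ D, (↑(F d) : Set β)).Countable :=
            Set.Countable.biUnion hDc (fun d _ => (F d).finite_toSet.countable)
          have hcover : 𝒞 ⊆ D ∪ ⋃ x ∈ (⋃ d ∈ D, (↑(F d) : Set β)), {c ∈ 𝒞 | x ∈ F c} := by
            intro c hc
            by_contra hcmem
            simp only [Set.mem_union, not_or] at hcmem
            obtain ⟨hcD, hcU⟩ := hcmem
            have hdisj : ∀ d ∈ D, c ≠ d → F c ∩ F d = ∅ := by
              intro d hd _
              rw [Finset.eq_empty_iff_forall_notMem]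
              intro y hy
              rcases Finset.mem_inter.1 hy with ⟨hyc, hyd⟩
              have hyE : (y : β) ∈ ⋃ d ∈ D, (↑(F d) : Set β) :=
                Set.mem_biUnion hd (by exact_mod_cast hyd)
              exact hcU (Set.mem_biUnion hyE ⟨hc, hyc⟩)
            have hins : insert c D ∈ {D : Set ι | D ⊆ 𝒞 ∧
                ∀ c' ∈ D, ∀ d ∈ D, c' ≠ d → F c' ∩ F d = ∅} := by
              constructor
              · exact Set.insert_subset hc hDmax.prop.1
              · intro c' hc' d hd hc'd
                rcases hc' with rfl | hc'
                · rcases hd with rfl | hd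
                  · exact absurd rfl hc'd
                  · exact hdisj d hd hc'd
                · rcases hd with rfl | hd
                  · rw [Finset.inter_comm]
                    exact hdisj c' hc' (Ne.symm hc'd)
                  · exact hDmax.prop.2 c' hc' d hd hc'd
            have := hDmax.le_of_ge hins (Set.subset_insert _ _)
            exact hcD (this (Set.mem_insert _ _))
          exact hunc ((hDc.union (Set.Countable.biUnion hE (fun x _ => hx x))).mono hcover)
        · exact ⟨D, hDmax.prop.1, hDc, ∅, hDmax.prop.2⟩

section Chains
variable {γ : Type*} [PartialOrder γ]

theorem chain_finset_max {C : Set γ} (hC : IsChain (· ≤ ·) C) :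
    ∀ s : Finset γ, ↑s ⊆ C → s.Nonempty → ∃ m ∈ s, ∀ x ∈ s, x ≤ m := by
  classical
  intro s
  induction s using Finset.induction_on with
  | empty => intro _ hne; simpa using hne
  | @insert a t ha ih =>
      intro hsub _
      have haC : a ∈ C := hsub (by simp)
      have htsub : (↑t : Set γ) ⊆ C := fun x hx => hsub (by
        simp only [Finset.coe_insert, Set.mem_insert_iff]
        exact Or.inr hx)
      rcases t.eq_empty_or_nonempty with rfl | htne
      · refine ⟨a, by simp, fun x hx => ?_⟩
        have : x = a := by simpa using hx
        rw [this]
      · obtain ⟨m, hmt, hm⟩ := ih htsub htne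
        have hmC : m ∈ C := htsub (by exact_mod_cast hmt)
        rcases eq_or_ne a m with rfl | ham
        · refine ⟨a, by simp, fun x hx => ?_⟩
          rcases Finset.mem_insert.1 hx with rfl | hx
          · exact le_rfl
          · exact hm x hx
        rcases hC haC hmC ham with hle | hle
        · refine ⟨m, Finset.mem_insert_of_mem hmt, fun x hx => ?_⟩
          rcases Finset.mem_insert.1 hx with rfl | hx
          · exact hle
          · exact hm x hx
        · refine ⟨a, by simp, fun x hx => ?_⟩
          rcases Finset.mem_insert.1 hx with rfl | hx
          · exact le_rfl
          · exact (hm x hx).trans hle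

theorem exists_sorted_four {C S : Set γ} (hC : IsChain (· ≤ ·) C) (hSC : S ⊆ C)
    (hS : ¬S.Countable) : ∃ a₀ a₁ a₂ a₃, a₀ ∈ S ∧ a₁ ∈ S ∧ a₂ ∈ S ∧ a₃ ∈ S ∧
      a₀ ≠ a₁ ∧ a₀ ≠ a₂ ∧ a₀ ≠ a₃ ∧ a₁ ≠ a₂ ∧ a₁ ≠ a₃ ∧ a₂ ≠ a₃ ∧
      a₀ ≤ a₁ ∧ a₁ ≤ a₂ ∧ a₂ ≤ a₃ := by
  classical
  have hinf : S.Infinite := fun hfin => hS hfin.countable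
  obtain ⟨t, htS, htcard⟩ := hinf.exists_subset_card_eq 4
  have htC : (↑t : Set γ) ⊆ C := htS.trans hSC
  have ht1 : t.Nonempty := Finset.card_pos.1 (by rw [htcard]; norm_num)
  obtain ⟨m3, hm3t, hm3⟩ := chain_finset_max hC t htC ht1
  set t2 := t.erase m3 with ht2def
  have ht2sub : t2 ⊆ t := Finset.erase_subset _ _
  have ht2card : t2.card = 3 := by rw [ht2def, Finset.card_erase_of_mem hm3t, htcard]
  obtain ⟨m2, hm2t, hm2⟩ := chain_finset_max hC t2 ((Finset.coe_subset.2 ht2sub).trans htC)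
    (Finset.card_pos.1 (by rw [ht2card]; norm_num))
  set t1 := t2.erase m2 with ht1def
  have ht1sub : t1 ⊆ t2 := Finset.erase_subset _ _
  have ht1card : t1.card = 2 := by rw [ht1def, Finset.card_erase_of_mem hm2t, ht2card]
  obtain ⟨m1, hm1t, hm1⟩ := chain_finset_max hC t1
    ((Finset.coe_subset.2 (ht1sub.trans ht2sub)).trans htC)
    (Finset.card_pos.1 (by rw [ht1card]; norm_num))
  set t0 := t1.erase m1 with ht0def
  have ht0sub : t0 ⊆ t1 := Finset.erase_subset _ _
  have ht0card : t0.card = 1 := by rw [ht0def, Finset.card_erase_of_mem hm1t, ht1card]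
  obtain ⟨m0, hm0t⟩ := Finset.card_pos.1 (by rw [ht0card]; norm_num : 0 < t0.card)
  have hm0S : m0 ∈ S := htS (ht2sub (ht1sub (ht0sub hm0t)))
  have hm1S : m1 ∈ S := htS (ht2sub (ht1sub hm1t))
  have hm2S : m2 ∈ S := htS (ht2sub hm2t)
  have hm3S : m3 ∈ S := htS hm3t
  have h01 : m0 ≠ m1 := (Finset.mem_erase.1 hm0t).1
  have h12 : m1 ≠ m2 := (Finset.mem_erase.1 hm1t).1
  have h02 : m0 ≠ m2 := (Finset.mem_erase.1 (ht0sub hm0t)).1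
  have h23 : m2 ≠ m3 := (Finset.mem_erase.1 hm2t).1
  have h13 : m1 ≠ m3 := (Finset.mem_erase.1 (ht1sub hm1t)).1
  have h03 : m0 ≠ m3 := (Finset.mem_erase.1 (ht1sub (ht0sub hm0t))).1
  exact ⟨m0, m1, m2, m3, hm0S, hm1S, hm2S, hm3S, h01, h02, h03, h12, h13, h23,
    hm1 m0 (ht0sub hm0t), hm2 m1 (ht1sub hm1t), hm3 m2 (ht2sub hm2t)⟩


end Chains

theorem inf_decomp {F : Finset α} {y : α} (hy : y ∈ F) :
    F.inf id = y ⊓ (F.erase y).inf id := by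
  classical
  conv_lhs => rw [← Finset.insert_erase hy]
  rw [Finset.inf_insert]; rfl

/-- Everything is generated by `G` when `α` is ω-free over `G`. -/
theorem gen_univ {G : Set α} (h : OmegaFree.{u,v} G) (c : α) : Gen G c := by
  classical
  by_contra hc
  set S0 : Set α := {d | Gen G d ∧ c ≤ d} ∪ compl '' {l | Gen G l ∧ l ≤ c} with hS0def
  have hS0fip : FIP S0 := by
    have key : ∀ F : Finset α, ↑F ⊆ S0 →
        ∃ uu ll, Gen G uu ∧ Gen G ll ∧ c ≤ uu ∧ ll ≤ c ∧ uu ⊓ llᶜ ≤ F.inf id := by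
      intro F
      induction F using Finset.induction_on with
      | empty => exact fun _ => ⟨⊤, ⊥, Gen.top, Gen.bot, le_top, bot_le, by simp⟩
      | @insert a t hat ih =>
          intro hsub
          have htsub : ↑t ⊆ S0 := fun x hx => hsub (by
            simp only [Finset.coe_insert, Set.mem_insert_iff]; exact Or.inr hx)
          obtain ⟨uu, ll, hgu, hgl, hcu, hlc, hle⟩ := ih htsub
          have haS0 : a ∈ S0 := hsub (by simp)
          rcases haS0 with ⟨hga, hca⟩ | ⟨l, ⟨hgl2, hl2c⟩, rfl⟩
          · refine ⟨a ⊓ uu, ll, hga.inf hgu, hgl, le_inf hca hcu, hlc, ?_⟩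
            rw [Finset.inf_insert, inf_assoc]
            exact inf_le_inf_left _ hle
          · refine ⟨uu, ll ⊔ l, hgu, hgl.sup hgl2, hcu, sup_le hlc hl2c, ?_⟩
            rw [Finset.inf_insert, compl_sup]
            show uu ⊓ (llᶜ ⊓ lᶜ) ≤ lᶜ ⊓ t.inf id
            calc uu ⊓ (llᶜ ⊓ lᶜ) = lᶜ ⊓ (uu ⊓ llᶜ) := by
                  rw [inf_comm (llᶜ) (lᶜ), ← inf_assoc, inf_comm uu (lᶜ), inf_assoc]
              _ ≤ lᶜ ⊓ t.inf id := inf_le_inf_left _ hle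
    intro F hF hbot
    obtain ⟨uu, ll, hgu, hgl, hcu, hlc, hle⟩ := key F hF
    rw [hbot] at hle
    have hub : uu ⊓ llᶜ = ⊥ := le_bot_iff.1 hle
    have hull : uu ≤ ll := by rwa [← sdiff_eq, sdiff_eq_bot_iff] at hub
    exact hc ((le_antisymm hcu (hull.trans hlc)) ▸ hgu)
  obtain ⟨W, hS0W, hW⟩ := exists_uf hS0fip
  set T : Set α := {d | d ∈ W ∧ Gen G d} with hTdef
  have hTW : T ⊆ W := fun x hx => hx.1
  have hfip1 : FIP (insert c T) := by
    intro F hF hbot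
    by_cases hcF : c ∈ F
    · set e := (F.erase c).inf id with hedef
      have hesub : ∀ z ∈ F.erase c, z ∈ T := fun z hz => erase_subset_of_insert hF hz
      have heW : e ∈ W := hW.finsetInf_mem (fun z hz => hTW (hesub z (by exact_mod_cast hz)))
      have hge : Gen G e := Gen.finsetInf (fun x hx => (hesub x hx).2)
      rw [inf_decomp hcF] at hbot
      have hcec : c ≤ eᶜ := le_compl_iff_disjoint_right.2 (disjoint_iff.2 hbot)
      have : eᶜ ∈ S0 := Or.inl ⟨hge.compl, hcec⟩
      exact hW.compl_not_mem heW (hS0W this)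
    · exact hW.finsetInf_ne_bot (fun z hz => by
        rcases hF hz with h' | h'
        · exact absurd h' (by rintro rfl; exact hcF (by exact_mod_cast hz))
        · exact hTW h') hbot
  have hfip2 : FIP (insert (cᶜ) T) := by
    intro F hF hbot
    by_cases hcF : cᶜ ∈ F
    · set e := (F.erase (cᶜ)).inf id with hedef
      have hesub : ∀ z ∈ F.erase (cᶜ), z ∈ T := fun z hz => erase_subset_of_insert hF hz
      have heW : e ∈ W := hW.finsetInf_mem (fun z hz => hTW (hesub z (by exact_mod_cast hz)))
      have hge : Gen G e := Gen.finsetInf (fun x hx => (hesub x hx).2)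
      rw [inf_decomp hcF] at hbot
      have hec : e ≤ c := by
        have hd : Disjoint (cᶜ) e := disjoint_iff.2 hbot
        have := le_compl_iff_disjoint_right.2 hd.symm
        rwa [compl_compl] at this
      have : eᶜ ∈ S0 := Or.inr ⟨e, ⟨hge, hec⟩, rfl⟩
      exact hW.compl_not_mem heW (hS0W this)
    · exact hW.finsetInf_ne_bot (fun z hz => by
        rcases hF hz with h' | h'
        · exact absurd h' (by rintro rfl; exact hcF (by exact_mod_cast hz))
        · exact hTW h') hbot
  obtain ⟨W1, hsubW1, hW1⟩ := exists_uf hfip1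
  obtain ⟨W2, hsubW2, hW2⟩ := exists_uf hfip2
  have hTW1 : T ⊆ W1 := (Set.subset_insert _ _).trans hsubW1
  have hTW2 : T ⊆ W2 := (Set.subset_insert _ _).trans hsubW2
  have hcW1 : c ∈ W1 := hsubW1 (Set.mem_insert _ _)
  have hccW2 : cᶜ ∈ W2 := hsubW2 (Set.mem_insert _ _)
  have hag : ∀ x ∈ G, ufHom.{u,v} hW1 x = ufHom.{u,v} hW2 x := by
    intro x hx
    have hgx : Gen G x := Gen.base hx
    by_cases hxW : x ∈ W
    · rw [ufHom_eq_top hW1 (hTW1 ⟨hxW, hgx⟩), ufHom_eq_top hW2 (hTW2 ⟨hxW, hgx⟩)]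
    · have hxcW : xᶜ ∈ W := (hW.total x).resolve_left hxW
      have hxT : xᶜ ∈ T := ⟨hxcW, hgx.compl⟩
      rw [ufHom_eq_bot hW1 (fun hxx => hW1.compl_not_mem hxx (hTW1 hxT)),
        ufHom_eq_bot hW2 (fun hxx => hW2.compl_not_mem hxx (hTW2 hxT))]
  have heq := homs_agree h (ufHom.{u,v} hW1) (ufHom.{u,v} hW2) hag
  have h1 : ufHom.{u,v} hW1 c = ⊤ := ufHom_eq_top hW1 hcW1
  have h2 : ufHom.{u,v} hW2 c = ⊥ :=
    ufHom_eq_bot hW2 (fun hcc => hW2.compl_not_mem hcc hccW2)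
  rw [heq, h2] at h1
  exact bb_top_ne_bot.{v} h1.symm


theorem bb_eq_top_of_down {x : BB.{v}} (hx : x.down = true) : x = ⊤ := by
  rcases x with ⟨b⟩
  cases b
  · exact absurd hx (by simp)
  · rfl

theorem bb_eq_bot_of_down {x : BB.{v}} (hx : x.down = false) : x = ⊥ := by
  rcases x with ⟨b⟩
  cases b
  · rfl
  · exact absurd hx (by simp)

theorem bb_down_top : (⊤ : BB.{v}).down = true := rfl
theorem bb_down_bot : (⊥ : BB.{v}).down = false := rfl

theorem eval_ufHom {G : Set α} (h : OmegaFree.{u,v} G) {M : Set α}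
    [DecidablePred (fun x => x ∈ M)] (hM : IsUF M)
    {F : Finset α} (hFG : ↑F ⊆ G) {c : α} (hgen : Gen (↑F : Set α) c) :
    ufHom.{u,v} hM c = eval h (F.filter (fun x => x ∈ M)) c := by
  set P := F.filter (fun x => x ∈ M) with hPdef
  have hPM : ↑P ⊆ M := fun x hx => (Finset.mem_filter.1 (by exact_mod_cast hx)).2
  have hPvalid : ↑P ⊆ G ∧ P.inf id ≠ ⊥ :=
    ⟨(Finset.coe_subset.2 (Finset.filter_subset _ _)).trans hFG, hM.finsetInf_ne_bot hPM⟩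
  obtain ⟨u, hu1, hu2⟩ := eval_spec h hPvalid
  rw [hu2]
  refine Gen.homAgree (ufHom.{u,v} hM) u (fun x hx => ?_) hgen
  have hxF : x ∈ F := by exact_mod_cast hx
  have hxG : x ∈ G := hFG hx
  rw [hu1 x hxG]
  by_cases hxM : x ∈ M
  · rw [ufHom_eq_top hM hxM, chi, if_pos (Finset.mem_filter.2 ⟨hxF, hxM⟩)]
  · rw [ufHom_eq_bot hM hxM, chi,
      if_neg (fun hp => hxM (Finset.mem_filter.1 hp).2)]

theorem eval_transfer {G : Set α} (h : OmegaFree.{u,v} G) {P P' : Finset α}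
    (hP : ↑P ⊆ G ∧ P.inf id ≠ ⊥) (hP' : ↑P' ⊆ G ∧ P'.inf id ≠ ⊥) {F : Finset α}
    (hFG : ↑F ⊆ G) {c : α} (hgen : Gen (↑F : Set α) c)
    (hagree : ∀ x ∈ F, (x ∈ P ↔ x ∈ P')) : eval h P c = eval h P' c := by
  obtain ⟨u, hu1, hu2⟩ := eval_spec h hP
  obtain ⟨u', hu'1, hu'2⟩ := eval_spec h hP'
  rw [hu2, hu'2]
  refine Gen.homAgree u u' (fun x hx => ?_) hgen
  have hxF : x ∈ F := by exact_mod_cast hx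
  rw [hu1 x (hFG hx), hu'1 x (hFG hx), chi, chi]
  by_cases hxP : x ∈ P
  · rw [if_pos hxP, if_pos ((hagree x hxF).1 hxP)]
  · rw [if_neg hxP, if_neg (fun hp' => hxP ((hagree x hxF).2 hp'))]


end OFreeAux

/-- An ω-free Boolean algebra has no uncountable chain: every subset totally ordered by
`≤` is countable. -/
theorem omegaFree_chain_countable {α : Type u} [BooleanAlgebra α]
    (G : Set α) (h : OmegaFree.{u, v} G)
    (C : Set α) (hC : IsChain (· ≤ ·) C) : C.Countable := by
  classical
  rcases subsingleton_or_nontrivial α with hss | hnt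
  · exact Set.to_countable C
  by_contra hunc
  -- every element has a finite support inside `G`
  have hsupp : ∀ c : α, ∃ F : Finset α, ↑F ⊆ G ∧ OFreeAux.Gen (↑F : Set α) c := fun c =>
    (OFreeAux.gen_univ h c).finite
  choose F hFG hFgen using hsupp
  -- uncountably many elements share the same support cardinality
  have h1 : ∃ n : ℕ, ¬{c ∈ C | (F c).card = n}.Countable := by
    by_contra hall
    push_neg at hall
    exact hunc ((Set.countable_iUnion hall).mono
      (fun c hc => Set.mem_iUnion.2 ⟨(F c).card, by exact ⟨hc, rfl⟩⟩))
  obtain ⟨n, hn⟩ := h1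
  -- Δ-system refinement
  obtain ⟨𝒟, h𝒟sub, h𝒟unc, R, hR⟩ :=
    OFreeAux.delta_system n {c ∈ C | (F c).card = n} F hn (fun c hc => hc.2)
  have h𝒟C : 𝒟 ⊆ C := h𝒟sub.trans (Set.sep_subset _ _)
  have hRsub : ∀ c ∈ 𝒟, R ⊆ F c := by
    intro c hc
    have hne : (𝒟 \ {c}).Nonempty := by
      rw [Set.nonempty_iff_ne_empty]
      intro hemp
      rw [Set.diff_eq_empty] at hemp
      exact h𝒟unc ((Set.countable_singleton c).mono hemp)
    obtain ⟨d, hd𝒟, hdc⟩ := hne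
    have hdc' : d ≠ c := by simpa using hdc
    rw [← hR c hc d hd𝒟 (Ne.symm hdc')]
    exact Finset.inter_subset_left
  set k := n - R.card with hkdef
  have hscard : ∀ c ∈ 𝒟, (F c \ R).card = k := fun c hc => by
    rw [Finset.card_sdiff_of_subset (hRsub c hc), (h𝒟sub hc).2]
  -- enumerations of the petals
  set e : α → Fin k → α := fun c i =>
    if hck : (F c \ R).card = k then ((F c \ R).equivFin.symm (Fin.cast hck.symm i)).val
    else ⊥ with hedef
  have he_mem : ∀ c ∈ 𝒟, ∀ i, e c i ∈ F c \ R := by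
    intro c hc i
    simp only [hedef, dif_pos (hscard c hc)]
    exact Finset.coe_mem _
  have he_surj : ∀ c ∈ 𝒟, ∀ x ∈ F c \ R, ∃ i, e c i = x := by
    intro c hc x hx
    refine ⟨Fin.cast (hscard c hc) ((F c \ R).equivFin ⟨x, hx⟩), ?_⟩
    simp only [hedef, dif_pos (hscard c hc)]
    have hcast : Fin.cast (hscard c hc).symm
        (Fin.cast (hscard c hc) ((F c \ R).equivFin ⟨x, hx⟩)) =
        (F c \ R).equivFin ⟨x, hx⟩ := by
      apply Fin.ext
      rfl
    rw [hcast, Equiv.symm_apply_apply]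
  -- the type function
  set bld : α → Finset {x : α // x ∈ R} × Finset (Fin k) → Finset α := fun c p =>
    p.1.image Subtype.val ∪ p.2.image (e c) with hblddef
  set T : α → (Finset {x : α // x ∈ R} × Finset (Fin k) → Bool) := fun c p =>
    (OFreeAux.eval h (bld c p) c).down with hTdef
  have h2 : ∃ t0 : Finset {x : α // x ∈ R} × Finset (Fin k) → Bool,
      ¬{c ∈ 𝒟 | T c = t0}.Countable := by
    by_contra hall
    push_neg at hall
    exact h𝒟unc ((Set.countable_iUnion hall).mono
      (fun c hc => Set.mem_iUnion.2 ⟨T c, by exact ⟨hc, rfl⟩⟩))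
  obtain ⟨t0, ht0unc⟩ := h2
  have h𝒟'sub : {c ∈ 𝒟 | T c = t0} ⊆ 𝒟 := Set.sep_subset _ _
  obtain ⟨a0, a1, a2, a3, ha0, ha1, ha2, ha3, h01, h02, h03, h12, h13, h23,
    hle01, hle12, hle23⟩ :=
    OFreeAux.exists_sorted_four hC (h𝒟'sub.trans h𝒟C) ht0unc
  -- the separating ultrafilter
  have hw : a2 ⊓ a1ᶜ ≠ ⊥ := by
    intro hb
    have hba : a2 ≤ a1 := by rwa [← sdiff_eq, sdiff_eq_bot_iff] at hb
    exact h12 (le_antisymm hle12 hba)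
  have hfipw : OFreeAux.FIP ({a2 ⊓ a1ᶜ} : Set α) := by
    intro Fi hFi hbot
    have hFi' : Fi ⊆ ({a2 ⊓ a1ᶜ} : Finset α) := fun x hx =>
      Finset.mem_singleton.2 (by simpa using hFi hx)
    rcases Finset.subset_singleton_iff.1 hFi' with rfl | rfl
    · rw [Finset.inf_empty] at hbot
      exact top_ne_bot hbot
    · rw [Finset.inf_singleton] at hbot
      exact hw hbot
  obtain ⟨M, hwM, hM⟩ := OFreeAux.exists_uf hfipw
  have hwM' : a2 ⊓ a1ᶜ ∈ M := hwM rfl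
  have ha2M : a2 ∈ M := hM.up _ hwM' _ inf_le_left
  have ha1M : a1 ∉ M := by
    intro hmem
    have hmem2 : a1 ⊓ (a2 ⊓ a1ᶜ) ∈ M := hM.inter _ hmem _ hwM'
    have hbb : a1 ⊓ (a2 ⊓ a1ᶜ) = ⊥ := by
      rw [inf_comm a2 (a1ᶜ), ← inf_assoc, inf_compl_eq_bot, bot_inf_eq]
    rw [hbb] at hmem2
    exact hM.nbot hmem2
  set P : α → Finset α := fun c => (F c).filter (fun x => x ∈ M) with hPdef
  set ρM : Finset {x : α // x ∈ R} :=
    Finset.univ.filter (fun x : {x : α // x ∈ R} => x.val ∈ M) with hρMdef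
  set qM : α → Finset (Fin k) := fun c => Finset.univ.filter (fun j => e c j ∈ M) with hqMdef
  have hbld : ∀ c ∈ 𝒟, bld c (ρM, qM c) = P c := by
    intro c hc
    ext x
    simp only [hblddef, hPdef, Finset.mem_union, Finset.mem_image, Finset.mem_filter]
    constructor
    · rintro (⟨y, hy, rfl⟩ | ⟨j, hj, rfl⟩)
      · have hyM : y.val ∈ M := (Finset.mem_filter.1 hy).2
        exact ⟨hRsub c hc y.2, hyM⟩
      · have hjM : e c j ∈ M := (Finset.mem_filter.1 hj).2
        have hmem := he_mem c hc j
        exact ⟨(Finset.mem_sdiff.1 hmem).1, hjM⟩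
    · rintro ⟨hxF, hxM⟩
      by_cases hxR : x ∈ R
      · exact Or.inl ⟨⟨x, hxR⟩, Finset.mem_filter.2 ⟨Finset.mem_univ _, hxM⟩, rfl⟩
      · obtain ⟨j, hj⟩ := he_surj c hc x (Finset.mem_sdiff.2 ⟨hxF, hxR⟩)
        exact Or.inr ⟨j, Finset.mem_filter.2 ⟨Finset.mem_univ _, by rw [hj]; exact hxM⟩, hj⟩
  set ρR : Finset α := R.filter (fun x => x ∈ M) with hρRdef
  have hbldR : ∀ c : α, bld c (ρM, (∅ : Finset (Fin k))) = ρR := by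
    intro c
    ext x
    simp only [hblddef, hρRdef, Finset.image_empty, Finset.union_empty, Finset.mem_image,
      Finset.mem_filter]
    constructor
    · rintro ⟨y, hy, rfl⟩
      exact ⟨y.2, (Finset.mem_filter.1 hy).2⟩
    · rintro ⟨hxR, hxM⟩
      exact ⟨⟨x, hxR⟩, Finset.mem_filter.2 ⟨Finset.mem_univ _, hxM⟩, rfl⟩
  -- validity facts
  have hPvalid : ∀ c ∈ 𝒟, ↑(P c) ⊆ G ∧ (P c).inf id ≠ ⊥ := by
    intro c _
    refine ⟨(Finset.coe_subset.2 (Finset.filter_subset _ _)).trans (hFG c), ?_⟩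
    exact hM.finsetInf_ne_bot (fun x hx =>
      (Finset.mem_filter.1 (by exact_mod_cast hx)).2)
  have ha1𝒟 : a1 ∈ 𝒟 := (Set.sep_subset _ _ : _ ⊆ 𝒟) ha1
  have ha0𝒟 : a0 ∈ 𝒟 := h𝒟'sub ha0
  have ha2𝒟 : a2 ∈ 𝒟 := h𝒟'sub ha2
  have ha3𝒟 : a3 ∈ 𝒟 := h𝒟'sub ha3
  have hρRvalid : ↑ρR ⊆ G ∧ ρR.inf id ≠ ⊥ := by
    refine ⟨?_, hM.finsetInf_ne_bot (fun x hx =>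
      (Finset.mem_filter.1 (by exact_mod_cast hx)).2)⟩
    refine (Finset.coe_subset.2 ((Finset.filter_subset _ _).trans (hRsub a1 ha1𝒟))).trans
      (hFG a1)
  -- key equalities
  have hval2 : OFreeAux.eval h (P a2) a2 = ⊤ := by
    rw [← OFreeAux.eval_ufHom h hM (hFG a2) (hFgen a2)]
    exact OFreeAux.ufHom_eq_top hM ha2M
  have hval1 : OFreeAux.eval h (P a1) a1 = ⊥ := by
    rw [← OFreeAux.eval_ufHom h hM (hFG a1) (hFgen a1)]
    exact OFreeAux.ufHom_eq_bot hM ha1M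
  have hTeq : ∀ c ∈ ({c ∈ 𝒟 | T c = t0} : Set α), T c = t0 := fun c hc => hc.2
  -- case distinction on the value of the root pattern
  rcases (Bool.eq_false_or_eq_true (t0 (ρM, (∅ : Finset (Fin k))))).symm with hx0 | hx0
  · -- root value false: contradiction with a2 < a3
    have e1 : OFreeAux.eval h (P a2) a3 = OFreeAux.eval h ρR a3 := by
      refine OFreeAux.eval_transfer h (hPvalid a2 ha2𝒟) hρRvalid (hFG a3) (hFgen a3) ?_
      intro x hxF
      simp only [hPdef, hρRdef, Finset.mem_filter]
      constructor
      · rintro ⟨hxF2, hxM⟩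
        have : x ∈ F a3 ∩ F a2 := Finset.mem_inter.2 ⟨hxF, hxF2⟩
        rw [hR a3 ha3𝒟 a2 ha2𝒟 (Ne.symm h23)] at this
        exact ⟨this, hxM⟩
      · rintro ⟨hxR, hxM⟩
        exact ⟨hRsub a2 ha2𝒟 hxR, hxM⟩
    have e2 : OFreeAux.eval h ρR a3 = ⊥ := by
      apply OFreeAux.bb_eq_bot_of_down
      have hta3 : T a3 = t0 := hTeq a3 ha3
      have hdown : (OFreeAux.eval h (bld a3 (ρM, (∅ : Finset (Fin k)))) a3).down = false := by
        calc (OFreeAux.eval h (bld a3 (ρM, (∅ : Finset (Fin k)))) a3).down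
            = T a3 (ρM, (∅ : Finset (Fin k))) := rfl
          _ = t0 (ρM, (∅ : Finset (Fin k))) := by rw [hta3]
          _ = false := hx0
      rw [hbldR a3] at hdown
      exact hdown
    have hmono := OFreeAux.eval_mono h hle23 (P := P a2)
    rw [hval2, e1, e2] at hmono
    exact OFreeAux.bb_top_ne_bot.{v} (le_bot_iff.1 hmono)
  · -- root value true: contradiction with a0 < a1
    have e1 : OFreeAux.eval h (P a1) a0 = OFreeAux.eval h ρR a0 := by
      refine OFreeAux.eval_transfer h (hPvalid a1 ha1𝒟) hρRvalid (hFG a0) (hFgen a0) ?_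
      intro x hxF
      simp only [hPdef, hρRdef, Finset.mem_filter]
      constructor
      · rintro ⟨hxF1, hxM⟩
        have : x ∈ F a0 ∩ F a1 := Finset.mem_inter.2 ⟨hxF, hxF1⟩
        rw [hR a0 ha0𝒟 a1 ha1𝒟 h01] at this
        exact ⟨this, hxM⟩
      · rintro ⟨hxR, hxM⟩
        exact ⟨hRsub a1 ha1𝒟 hxR, hxM⟩
    have e2 : OFreeAux.eval h ρR a0 = ⊤ := by
      apply OFreeAux.bb_eq_top_of_down
      have hta0 : T a0 = t0 := hTeq a0 ha0
      have hdown : (OFreeAux.eval h (bld a0 (ρM, (∅ : Finset (Fin k)))) a0).down = true := by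
        calc (OFreeAux.eval h (bld a0 (ρM, (∅ : Finset (Fin k)))) a0).down
            = T a0 (ρM, (∅ : Finset (Fin k))) := rfl
          _ = t0 (ρM, (∅ : Finset (Fin k))) := by rw [hta0]
          _ = true := hx0
      rw [hbldR a0] at hdown
      exact hdown
    have hmono := OFreeAux.eval_mono h hle01 (P := P a1)
    rw [hval1, e1, e2] at hmono
    exact OFreeAux.bb_top_ne_bot.{v} (le_bot_iff.1 hmono)
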